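/- For each i ∈ {0,…,4}, the set P(i) = {(x,y) ∈ ℤ×ℤ : x + 3y ≡ i (mod 5)} is a perfect distance-1 dominating set of the infinite grid ℤ×ℤ (every vertex is within ℓ1-distance 1 of exactly one element of P(i)), and P(i) is a (3,3) broadcast dominating set of ℤ×ℤ: for every (a,b) ∈ ℤ×ℤ, the sum of (3 − d((a,b),(x,y))) over all (x,y) ∈ P(i) with d((a,b),(x,y)) < 3 is at least 3, where d denotes ℓ1-distance. -/

import Mathlib

lemma sumkey : ∀ j : ZMod 5, (3:ℤ) ≤ ∑ q ∈ ((Finset.Icc (-3:ℤ) 3 ×ˢ Finset.Icc (-3:ℤ) 3).filter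
    (fun q : ℤ×ℤ => |q.1| + |q.2| < 3 ∧ ((q.1 + 3*q.2 : ℤ) : ZMod 5) = j)), (3 - (|q.1| + |q.2|)) := by
  decide

lemma five_cases (x y : ℤ) (h : |x| + |y| ≤ 1) :
    (x = 0 ∧ y = 0) ∨ (x = 1 ∧ y = 0) ∨ (x = -1 ∧ y = 0) ∨ (x = 0 ∧ y = 1) ∨ (x = 0 ∧ y = -1) := by
  rw [Int.abs_eq_natAbs, Int.abs_eq_natAbs] at h
  omega

lemma uniq (j : ZMod 5) : ∃! q : ℤ × ℤ, ((q.1 + 3 * q.2 : ℤ) : ZMod 5) = j ∧ |q.1| + |q.2| ≤ 1 := by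
  have main : ∀ w : ℤ × ℤ, (((w.1 + 3 * w.2 : ℤ) : ZMod 5) = j ∧ |w.1| + |w.2| ≤ 1) →
      ∀ q : ℤ × ℤ, (((q.1 + 3 * q.2 : ℤ) : ZMod 5) = j ∧ |q.1| + |q.2| ≤ 1) → q = w := by
    rintro ⟨wx, wy⟩ ⟨hw1, hw2⟩ ⟨x, y⟩ ⟨h1, h2⟩
    rcases five_cases x y h2 with ⟨hx, hy⟩ | ⟨hx, hy⟩ | ⟨hx, hy⟩ | ⟨hx, hy⟩ | ⟨hx, hy⟩ <;>
      rcases five_cases wx wy hw2 with ⟨hwx, hwy⟩ | ⟨hwx, hwy⟩ | ⟨hwx, hwy⟩ | ⟨hwx, hwy⟩ | ⟨hwx, hwy⟩ <;>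
      subst hx hy hwx hwy <;> simp only at h1 hw1 <;>
      first
        | rfl
        | (exfalso; rw [← hw1] at h1; revert h1; decide)
  fin_cases j
  · exact ⟨(0, 0), by constructor; rfl; decide, main (0, 0) (by constructor; rfl; decide)⟩
  · exact ⟨(1, 0), by constructor; rfl; decide, main (1, 0) (by constructor; rfl; decide)⟩
  · exact ⟨(0, -1), by constructor; rfl; decide, main (0, -1) (by constructor; rfl; decide)⟩
  · exact ⟨(0, 1), by constructor; rfl; decide, main (0, 1) (by constructor; rfl; decide)⟩
  · exact ⟨(-1, 0), by constructor; rfl; decide, main (-1, 0) (by constructor; rfl; decide)⟩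

theorem stmt17 (i : ZMod 5) :
    (∀ a b : ℤ, ∃! p : ℤ × ℤ,
        ((p.1 + 3 * p.2 : ℤ) : ZMod 5) = i ∧ |a - p.1| + |b - p.2| ≤ 1) ∧
      ∀ a b : ℤ, (3 : ℤ) ≤
        ∑ p ∈ (Finset.Icc (a - 3) (a + 3) ×ˢ Finset.Icc (b - 3) (b + 3)).filter
            (fun p : ℤ × ℤ => |a - p.1| + |b - p.2| < 3 ∧ ((p.1 + 3 * p.2 : ℤ) : ZMod 5) = i),
          (3 - (|a - p.1| + |b - p.2|)) := by
  constructor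
  · intro a b
    obtain ⟨w, ⟨hw1, hw2⟩, hu⟩ := uniq (i - ((a + 3 * b : ℤ) : ZMod 5))
    refine ⟨(w.1 + a, w.2 + b), ⟨?_, ?_⟩, ?_⟩
    · push_cast
      push_cast at hw1
      linear_combination hw1
    · have e1 : a - (w.1 + a) = -w.1 := by ring
      have e2 : b - (w.2 + b) = -w.2 := by ring
      rw [e1, e2, abs_neg, abs_neg]; exact hw2
    · rintro ⟨x, y⟩ ⟨h1, h2⟩
      have := hu (x - a, y - b) ⟨by push_cast; push_cast at h1; linear_combination h1, by
        have e1 : |x - a| = |a - x| := abs_sub_comm _ _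
        have e2 : |y - b| = |b - y| := abs_sub_comm _ _
        simpa [e1, e2] using h2⟩
      have hx : x - a = w.1 := congrArg Prod.fst this
      have hy : y - b = w.2 := congrArg Prod.snd this
      exact Prod.ext (by omega) (by omega)
  · intro a b
    have key := sumkey (i - ((a + 3 * b : ℤ) : ZMod 5))
    refine key.trans (le_of_eq ?_)
    refine Finset.sum_nbij' (fun q => (q.1 + a, q.2 + b)) (fun p => (p.1 - a, p.2 - b)) ?_ ?_ ?_ ?_ ?_
    · rintro ⟨x, y⟩ hq
      simp only [Finset.mem_filter, Finset.mem_product, Finset.mem_Icc] at hq ⊢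
      obtain ⟨⟨⟨h1, h2⟩, h3, h4⟩, h5, h6⟩ := hq
      refine ⟨⟨⟨by omega, by omega⟩, by omega, by omega⟩, ?_, ?_⟩
      · have e1 : a - (x + a) = -x := by ring
        have e2 : b - (y + b) = -y := by ring
        rw [e1, e2, abs_neg, abs_neg]; exact h5
      · push_cast
        push_cast at h6
        linear_combination h6
    · rintro ⟨x, y⟩ hp
      simp only [Finset.mem_filter, Finset.mem_product, Finset.mem_Icc] at hp ⊢
      obtain ⟨⟨⟨h1, h2⟩, h3, h4⟩, h5, h6⟩ := hp
      refine ⟨⟨⟨by omega, by omega⟩, by omega, by omega⟩, ?_, ?_⟩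
      · have e1 : |x - a| = |a - x| := abs_sub_comm _ _
        have e2 : |y - b| = |b - y| := abs_sub_comm _ _
        rw [e1, e2]; exact h5
      · push_cast
        push_cast at h6
        linear_combination h6
    · rintro ⟨x, y⟩ _; simp
    · rintro ⟨x, y⟩ _; simp
    · rintro ⟨x, y⟩ _
      have e1 : a - (x + a) = -x := by ring
      have e2 : b - (y + b) = -y := by ring
      rw [e1, e2, abs_neg, abs_neg]
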